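/- Suppose (A(X,E), ‖·‖_∞) has property (P) and A(X,E) contains the constant functions. Then there exist maps Λ^T : Y_cT → E* and Λ^S : Y_cS → E* (namely Λ^T_y(e) = T(ẽ)(y) and Λ^S_y(e) = S(ẽ)(y), where ẽ is the constant function with value e) such that Tf(y) = Λ^T_y(f(φ(y))) for all f ∈ A(X,E) and y ∈ Y_cT, and Sf(y) = Λ^S_y(f(φ(y))) for all f ∈ A(X,E) and y ∈ Y_cS. -/

import Mathlib

open Set Filter Topology

/-- `B` together with the norm `nB` is a regular Banach function algebra on the
compact Hausdorff space `X`: it separates points (it contains the constants since it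
is a subalgebra), `nB` is a complete algebra norm on `B` dominating the sup norm, and
the regularity (partition of unity) property holds. -/
structure IsRegularBanachFunctionAlgebra {X : Type*} [TopologicalSpace X] [CompactSpace X]
    [T2Space X] (B : Subalgebra ℂ C(X, ℂ)) (nB : C(X, ℂ) → ℝ) : Prop where
  separates : ∀ x y : X, x ≠ y → ∃ f ∈ B, f x ≠ f y
  norm_nonneg : ∀ f ∈ B, 0 ≤ nB f
  norm_add_le : ∀ f ∈ B, ∀ g ∈ B, nB (f + g) ≤ nB f + nB g
  norm_smul : ∀ (c : ℂ), ∀ f ∈ B, nB (c • f) = ‖c‖ * nB f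
  norm_eq_zero_iff : ∀ f ∈ B, (nB f = 0 ↔ f = 0)
  norm_mul_le : ∀ f ∈ B, ∀ g ∈ B, nB (f * g) ≤ nB f * nB g
  sup_norm_le : ∀ f ∈ B, ‖f‖ ≤ nB f
  complete : ∀ u : ℕ → C(X, ℂ), (∀ n, u n ∈ B) →
    (∀ ε : ℝ, 0 < ε → ∃ N : ℕ, ∀ m ≥ N, ∀ n ≥ N, nB (u m - u n) < ε) →
    ∃ l ∈ B, ∀ ε : ℝ, 0 < ε → ∃ N : ℕ, ∀ n ≥ N, nB (u n - l) < ε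
  regular : ∀ K : Set X, IsCompact K → ∀ (n : ℕ) (U : Fin n → Set X),
    (∀ i, IsOpen (U i)) → K ⊆ ⋃ i, U i →
    ∃ g : Fin n → C(X, ℂ), (∀ i, g i ∈ B) ∧ (∀ i, closure {x | g i x ≠ 0} ⊆ U i) ∧
      ∀ x ∈ K, (∑ i, g i x) = 1

variable {X Y E : Type*} [TopologicalSpace X] [CompactSpace X] [T2Space X]
  [TopologicalSpace Y] [CompactSpace Y] [T2Space Y]
  [NormedAddCommGroup E] [NormedSpace ℂ E] [CompleteSpace E]
  (A : Submodule ℂ C(X, E))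

/-- The cozero set of a function in the subspace `A = A(X,E)` of `C(X,E)`. -/
def coz (f : ↥A) : Set X := {x | (f : C(X, E)) x ≠ 0}

/-- `T, S : A(X,E) → C(Y)` are jointly separating: `Tf · Sg = 0` on `Y` whenever `f`
and `g` have disjoint cozero sets. -/
def JointlySeparating (T S : ↥A →ₗ[ℂ] C(Y, ℂ)) : Prop :=
  ∀ f g : ↥A, coz A f ∩ coz A g = ∅ → ∀ y : Y, T f y * S g y = 0

/-- The set `Y₁ = (⋃_f coz(Tf)) ∩ (⋃_f coz(Sf))`. -/
def Y1 (T S : ↥A →ₗ[ℂ] C(Y, ℂ)) : Set Y :=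
  {y | (∃ f : ↥A, T f y ≠ 0) ∧ (∃ f : ↥A, S f y ≠ 0)}

/-- `x` is a support point of `y ∈ Y₁`: every neighborhood `V` of `x` admits
`f ∈ A(X,E)` with `coz(f) ⊆ V` and `Tf(y) ≠ 0` or `Sf(y) ≠ 0`. -/
def IsSupportPoint (T S : ↥A →ₗ[ℂ] C(Y, ℂ)) (y : Y) (x : X) : Prop :=
  ∀ V ∈ 𝓝 x, ∃ f : ↥A, coz A f ⊆ V ∧ (T f y ≠ 0 ∨ S f y ≠ 0)

/-- `(A(X,E), nn)` has property (P): for every `f ∈ A(X,E)` and `x ∈ X` with `f(x) = 0`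
there is a sequence `(fₙ)` in `A(X,E)`, each term vanishing on a neighborhood of `x`,
with `nn (fₙ - f) → 0`. -/
def HasPropertyP (A : Submodule ℂ C(X, E)) (nn : C(X, E) → ℝ) : Prop :=
  ∀ f : ↥A, ∀ x : X, (f : C(X, E)) x = 0 →
    ∃ u : ℕ → C(X, E), (∀ n, u n ∈ A) ∧ (∀ n, ∀ᶠ z in 𝓝 x, u n z = 0) ∧
      Filter.Tendsto (fun n => nn (u n - (f : C(X, E)))) Filter.atTop (𝓝 0)

/-- Key lemma: if `y ∈ Y₁` and `h ∈ A` vanishes on a neighborhood of the support point,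
then `Th(y) = 0` and `Sh(y) = 0`. -/
theorem vanish_of_vanish_nhds
    (B : Subalgebra ℂ C(X, ℂ)) (nB : C(X, ℂ) → ℝ)
    (hB : IsRegularBanachFunctionAlgebra B nB)
    (hmod : ∀ g ∈ B, ∀ f : ↥A, g • (f : C(X, E)) ∈ A)
    (T S : ↥A →ₗ[ℂ] C(Y, ℂ)) (hTS : JointlySeparating A T S)
    {y : Y} (hy : y ∈ Y1 A T S) {x : X} (hx : IsSupportPoint A T S y x)
    (h : ↥A) {V : Set X} (hVo : IsOpen V) (hxV : x ∈ V)
    (hhV : ∀ z ∈ V, (h : C(X, E)) z = 0) :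
    T h y = 0 ∧ S h y = 0 := by
  -- `coz h` is disjoint from `V`
  have hcozh : ∀ z ∈ coz A h, z ∉ V := fun z hz hzV => hz (hhV z hzV)
  -- choose `W` open with `x ∈ W`, `closure W ⊆ V`
  obtain ⟨t, ht, htc, htV⟩ := exists_mem_nhds_isClosed_subset (hVo.mem_nhds hxV)
  set W := interior t with hW
  have hxW : x ∈ W := mem_interior_iff_mem_nhds.mpr ht
  have hWV : closure W ⊆ V := (htc.closure_subset_iff.mpr interior_subset).trans htV
  have hWo : IsOpen W := isOpen_interior
  -- partition of unity subordinate to `V, (closure W)ᶜ`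
  have hcover : (univ : Set X) ⊆ ⋃ i, (![V, (closure W)ᶜ] : Fin 2 → Set X) i := by
    intro z _
    by_cases hz : z ∈ V
    · exact mem_iUnion.mpr ⟨0, hz⟩
    · exact mem_iUnion.mpr ⟨1, fun hc => hz (hWV hc)⟩
  obtain ⟨e, heB, hesupp, hesum⟩ := hB.regular univ isCompact_univ 2 ![V, (closure W)ᶜ]
    (by intro i; fin_cases i <;> simp [hVo, isClosed_closure.isOpen_compl]) hcover
  -- factorization of an arbitrary `g₀ ∈ A`
  have hfact : ∀ g₀ : ↥A, ∃ a b : ↥A, a + b = g₀ ∧ coz A a ⊆ V ∧ ∀ z ∈ W, (b : C(X, E)) z = 0 := by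
    intro g₀
    refine ⟨⟨e 0 • (g₀ : C(X, E)), hmod _ (heB 0) g₀⟩, ⟨e 1 • (g₀ : C(X, E)), hmod _ (heB 1) g₀⟩,
      ?_, ?_, ?_⟩
    · ext1
      ext z
      have h1 : e 0 z + e 1 z = 1 := by
        have := hesum z (mem_univ z); simpa [Fin.sum_univ_two] using this
      simp only [Submodule.coe_add, ContinuousMap.add_apply, ContinuousMap.smul_apply']
      rw [← add_smul, h1, one_smul]
    · intro z hz
      have hz' : e 0 z ≠ 0 := by
        simp only [coz, mem_setOf_eq, ContinuousMap.smul_apply'] at hz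
        intro h0; exact hz (by rw [h0, zero_smul])
      have : z ∈ closure {w | e 0 w ≠ 0} := subset_closure hz'
      simpa using hesupp 0 this
    · intro z hz
      have hz1 : e 1 z = 0 := by
        by_contra h0
        have : z ∈ closure {w | e 1 w ≠ 0} := subset_closure h0
        have := hesupp 1 this
        simp only [Matrix.cons_val_one, Matrix.head_cons, mem_compl_iff] at this
        exact this (subset_closure hz)
      simp [ContinuousMap.smul_apply', hz1]
  constructor
  · -- T h y = 0
    by_contra hT
    obtain ⟨_, g₀, hg₀⟩ := hy
    obtain ⟨a, b, hab, hcoza, hbW⟩ := hfact g₀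
    have hSa : S a y = 0 := by
      have hdisj : coz A h ∩ coz A a = ∅ := by
        apply eq_empty_iff_forall_notMem.mpr
        rintro z ⟨hz1, hz2⟩
        exact hcozh z hz1 (hcoza hz2)
      have := hTS h a hdisj y
      exact (mul_eq_zero.mp this).resolve_left hT
    have hSb : S b y ≠ 0 := by
      have : S g₀ y = S a y + S b y := by rw [← hab, map_add]; rfl
      rw [this, hSa, zero_add] at hg₀
      exact hg₀
    obtain ⟨f, hcozf, hfT⟩ := hx W (hWo.mem_nhds hxW)
    rcases hfT with hfT | hfS
    · -- T f y ≠ 0, use disjointness of coz f and coz b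
      have hdisj : coz A f ∩ coz A b = ∅ := by
        apply eq_empty_iff_forall_notMem.mpr
        rintro z ⟨hz1, hz2⟩
        exact hz2 (hbW z (hcozf hz1))
      have := hTS f b hdisj y
      exact hSb ((mul_eq_zero.mp this).resolve_left hfT)
    · -- S f y ≠ 0, but coz f ⊆ W ⊆ V disjoint from coz h
      have hdisj : coz A h ∩ coz A f = ∅ := by
        apply eq_empty_iff_forall_notMem.mpr
        rintro z ⟨hz1, hz2⟩
        exact hcozh z hz1 (hWV (subset_closure (hcozf hz2)))
      have := hTS h f hdisj y
      exact hfS ((mul_eq_zero.mp this).resolve_left hT)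
  · -- S h y = 0
    by_contra hS
    obtain ⟨⟨g₀, hg₀⟩, _⟩ := hy
    obtain ⟨a, b, hab, hcoza, hbW⟩ := hfact g₀
    have hTa : T a y = 0 := by
      have hdisj : coz A a ∩ coz A h = ∅ := by
        apply eq_empty_iff_forall_notMem.mpr
        rintro z ⟨hz1, hz2⟩
        exact hcozh z hz2 (hcoza hz1)
      have := hTS a h hdisj y
      exact (mul_eq_zero.mp this).resolve_right hS
    have hTb : T b y ≠ 0 := by
      have : T g₀ y = T a y + T b y := by rw [← hab, map_add]; rfl
      rw [this, hTa, zero_add] at hg₀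
      exact hg₀
    obtain ⟨f, hcozf, hfT⟩ := hx W (hWo.mem_nhds hxW)
    rcases hfT with hfT | hfS
    · have hdisj : coz A f ∩ coz A h = ∅ := by
        apply eq_empty_iff_forall_notMem.mpr
        rintro z ⟨hz1, hz2⟩
        exact hcozh z hz2 (hWV (subset_closure (hcozf hz1)))
      have := hTS f h hdisj y
      exact hS ((mul_eq_zero.mp this).resolve_left hfT)
    · have hdisj : coz A b ∩ coz A f = ∅ := by
        apply eq_empty_iff_forall_notMem.mpr
        rintro z ⟨hz1, hz2⟩
        exact hz1 (hbW z (hcozf hz2))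
      have := hTS b f hdisj y
      exact hTb ((mul_eq_zero.mp this).resolve_right hfS)

/-- If `y ∈ Y₁`, evaluation `f ↦ Tf(y)` is continuous, and `f(φ y) = 0`, then `Tf(y) = 0`. -/
theorem eval_eq_zero_of_zero_at_support
    (B : Subalgebra ℂ C(X, ℂ)) (nB : C(X, ℂ) → ℝ)
    (hB : IsRegularBanachFunctionAlgebra B nB)
    (hmod : ∀ g ∈ B, ∀ f : ↥A, g • (f : C(X, E)) ∈ A)
    (hP : HasPropertyP A (fun f => ‖f‖))
    (T S : ↥A →ₗ[ℂ] C(Y, ℂ)) (hTS : JointlySeparating A T S)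
    {y : Y} (hy : y ∈ Y1 A T S) {x : X} (hx : IsSupportPoint A T S y x)
    (hcont : Continuous fun f : ↥A => T f y)
    (f : ↥A) (hf : (f : C(X, E)) x = 0) : T f y = 0 := by
  obtain ⟨u, huA, huz, hunorm⟩ := hP f x hf
  have htend : Tendsto (fun n => (⟨u n, huA n⟩ : ↥A)) atTop (𝓝 f) := by
    rw [tendsto_subtype_rng]
    exact tendsto_iff_norm_sub_tendsto_zero.mpr hunorm
  have hzero : ∀ n, T ⟨u n, huA n⟩ y = 0 := by
    intro n
    obtain ⟨V, hVsub, hVo, hxV⟩ := mem_nhds_iff.mp (huz n)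
    exact (vanish_of_vanish_nhds A B nB hB hmod T S hTS hy hx ⟨u n, huA n⟩ hVo hxV
      (fun z hz => hVsub hz)).1
  have h1 : Tendsto (fun n => T (⟨u n, huA n⟩ : ↥A) y) atTop (𝓝 (T f y)) :=
    (hcont.tendsto f).comp htend
  have h2 : Tendsto (fun n => T (⟨u n, huA n⟩ : ↥A) y) atTop (𝓝 (0 : ℂ)) := by
    simp only [hzero]; exact tendsto_const_nhds
  exact tendsto_nhds_unique h1 h2

/-- Generic construction of a representing functional for a single linear map `R`. -/
theorem exists_functional_generic
    (R : ↥A →ₗ[ℂ] C(Y, ℂ)) (hconst : ∀ e : E, ContinuousMap.const X e ∈ A)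
    (hP : HasPropertyP A (fun f => ‖f‖)) {y : Y} {x : X}
    (hvan : ∀ h : ↥A, ∀ V : Set X, IsOpen V → x ∈ V →
      (∀ z ∈ V, (h : C(X, E)) z = 0) → R h y = 0)
    (hcont : Continuous fun f : ↥A => R f y) :
    ∃ Λ : E →L[ℂ] ℂ, (∀ e : E, Λ e = R ⟨ContinuousMap.const X e, hconst e⟩ y) ∧
      ∀ f : ↥A, R f y = Λ ((f : C(X, E)) x) := by
  have heval : ∀ f : ↥A, (f : C(X, E)) x = 0 → R f y = 0 := by
    intro f hf
    obtain ⟨u, huA, huz, hunorm⟩ := hP f x hf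
    have htend : Tendsto (fun n => (⟨u n, huA n⟩ : ↥A)) atTop (𝓝 f) := by
      rw [tendsto_subtype_rng]
      exact tendsto_iff_norm_sub_tendsto_zero.mpr hunorm
    have hzero : ∀ n, R ⟨u n, huA n⟩ y = 0 := by
      intro n
      obtain ⟨V, hVsub, hVo, hxV⟩ := mem_nhds_iff.mp (huz n)
      exact hvan ⟨u n, huA n⟩ V hVo hxV (fun z hz => hVsub hz)
    have h1 : Tendsto (fun n => R (⟨u n, huA n⟩ : ↥A) y) atTop (𝓝 (R f y)) :=
      (hcont.tendsto f).comp htend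
    have h2 : Tendsto (fun n => R (⟨u n, huA n⟩ : ↥A) y) atTop (𝓝 (0 : ℂ)) := by
      simp only [hzero]; exact tendsto_const_nhds
    exact tendsto_nhds_unique h1 h2
  refine ⟨{ toFun := fun e => R ⟨ContinuousMap.const X e, hconst e⟩ y
            map_add' := ?_
            map_smul' := ?_
            cont := ?_ }, fun e => rfl, ?_⟩
  · intro e e'
    have h3 : (⟨ContinuousMap.const X (e + e'), hconst _⟩ : ↥A) =
        ⟨ContinuousMap.const X e, hconst e⟩ + ⟨ContinuousMap.const X e', hconst e'⟩ := by
      ext z; simp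
    show R ⟨ContinuousMap.const X (e + e'), hconst _⟩ y = _
    rw [h3, map_add]; rfl
  · intro c e
    have h3 : (⟨ContinuousMap.const X (c • e), hconst _⟩ : ↥A) =
        c • ⟨ContinuousMap.const X e, hconst e⟩ := by
      ext z; simp
    show R ⟨ContinuousMap.const X (c • e), hconst _⟩ y = _
    rw [h3, map_smul]; rfl
  · exact hcont.comp (Continuous.subtype_mk ContinuousMap.continuous_const' _)
  · intro f
    set e := (f : C(X, E)) x with he
    have hg : ((f - ⟨ContinuousMap.const X e, hconst e⟩ : ↥A) : C(X, E)) x = 0 := by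
      simp [he]
    have := heval _ hg
    rw [map_sub] at this
    have h2 : R f y - R ⟨ContinuousMap.const X e, hconst e⟩ y = 0 := this
    show R f y = R ⟨ContinuousMap.const X e, hconst e⟩ y
    exact sub_eq_zero.mp h2

/-- **Lemma 3.10.** Suppose `(A(X,E), ‖·‖_∞)` has property (P) and `A(X,E)` contains the
constants.  Then there are maps `Λᵀ : Y_cT → E*` and `Λˢ : Y_cS → E*`, given by
`Λᵀ_y(e) = T(ẽ)(y)` and `Λˢ_y(e) = S(ẽ)(y)`, such that `Tf(y) = Λᵀ_y(f(φ(y)))` on `Y_cT`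
and `Sf(y) = Λˢ_y(f(φ(y)))` on `Y_cS`. -/
theorem exists_representing_functionals
    (B : Subalgebra ℂ C(X, ℂ)) (nB : C(X, ℂ) → ℝ)
    (hB : IsRegularBanachFunctionAlgebra B nB)
    (hmod : ∀ g ∈ B, ∀ f : ↥A, g • (f : C(X, E)) ∈ A)
    (hP : HasPropertyP A (fun f => ‖f‖))
    (hconst : ∀ e : E, ContinuousMap.const X e ∈ A)
    (T S : ↥A →ₗ[ℂ] C(Y, ℂ)) (hTS : JointlySeparating A T S)
    (φ : Y → X) (hφ : ∀ y ∈ Y1 A T S, IsSupportPoint A T S y (φ y)) :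
    ∃ ΛT ΛS : Y → (E →L[ℂ] ℂ),
      (∀ y ∈ {y ∈ Y1 A T S | Continuous fun f : ↥A => T f y},
        (∀ e : E, ΛT y e = T ⟨ContinuousMap.const X e, hconst e⟩ y) ∧
        ∀ f : ↥A, T f y = ΛT y ((f : C(X, E)) (φ y))) ∧
      (∀ y ∈ {y ∈ Y1 A T S | Continuous fun f : ↥A => S f y},
        (∀ e : E, ΛS y e = S ⟨ContinuousMap.const X e, hconst e⟩ y) ∧
        ∀ f : ↥A, S f y = ΛS y ((f : C(X, E)) (φ y))) := by
  classical
  have hexT : ∀ y ∈ {y ∈ Y1 A T S | Continuous fun f : ↥A => T f y},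
      ∃ Λ : E →L[ℂ] ℂ, (∀ e : E, Λ e = T ⟨ContinuousMap.const X e, hconst e⟩ y) ∧
        ∀ f : ↥A, T f y = Λ ((f : C(X, E)) (φ y)) := by
    rintro y ⟨hy1, hyc⟩
    exact exists_functional_generic A T hconst hP
      (fun h V hVo hxV hhV => (vanish_of_vanish_nhds A B nB hB hmod T S hTS hy1 (hφ y hy1)
        h hVo hxV hhV).1) hyc
  have hexS : ∀ y ∈ {y ∈ Y1 A T S | Continuous fun f : ↥A => S f y},
      ∃ Λ : E →L[ℂ] ℂ, (∀ e : E, Λ e = S ⟨ContinuousMap.const X e, hconst e⟩ y) ∧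
        ∀ f : ↥A, S f y = Λ ((f : C(X, E)) (φ y)) := by
    rintro y ⟨hy1, hyc⟩
    exact exists_functional_generic A S hconst hP
      (fun h V hVo hxV hhV => (vanish_of_vanish_nhds A B nB hB hmod T S hTS hy1 (hφ y hy1)
        h hVo hxV hhV).2) hyc
  refine ⟨fun y => if h : y ∈ {y ∈ Y1 A T S | Continuous fun f : ↥A => T f y}
      then (hexT y h).choose else 0,
    fun y => if h : y ∈ {y ∈ Y1 A T S | Continuous fun f : ↥A => S f y}
      then (hexS y h).choose else 0, ?_, ?_⟩
  · intro y hy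
    beta_reduce
    rw [dif_pos hy]
    exact (hexT y hy).choose_spec
  · intro y hy
    beta_reduce
    rw [dif_pos hy]
    exact (hexS y hy).choose_spec
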